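/- Let (V_t)_{t∈ℕ} be the sequence of functions on ℕ defined by V_0 ≡ 0 and V_{t+1}(S) = min{ f(S) + β V_t(S+1), f(S) + λ + a V_t(S+1) } − f(0) − (1−α)V_t(1) for S ≥ 1, and V_{t+1}(0) = 0, where f : ℕ → [0,∞) is non-decreasing, λ ≥ 0 and 0 < a < β < 1, α ∈ (0,1). Then for every t ∈ ℕ, V_t is non-decreasing on ℕ (for all S₂ ≥ S₁ ≥ 0, V_t(S₂) ≥ V_t(S₁)). -/
import Mathlib


theorem stmt10 (f : ℕ → ℝ) (hf0 : ∀ k, 0 ≤ f k) (hfmono : Monotone f)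
    (a β α lam : ℝ) (ha0 : 0 < a) (hab : a < β) (hβ1 : β < 1)
    (hα : α ∈ Set.Ioo (0 : ℝ) 1) (hlam : 0 ≤ lam)
    (V : ℕ → ℕ → ℝ)
    (hV0 : ∀ S, V 0 S = 0)
    (hVz : ∀ t, V (t + 1) 0 = 0)
    (hVrec : ∀ t S, 1 ≤ S → V (t + 1) S =
      min (f S + β * V t (S + 1)) (f S + lam + a * V t (S + 1)) - f 0 - (1 - α) * V t 1) :
    ∀ t, Monotone (V t) := by
  obtain ⟨hα0, hα1⟩ := hα
  have hb0 : 0 < β := ha0.trans hab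
  have hfm : ∀ S : ℕ, f 0 ≤ f S := fun S => hfmono (Nat.zero_le S)
  suffices h : ∀ t, Monotone (V t) ∧ ∀ S : ℕ, 1 ≤ S →
      (1 - α) * V t S ≤ f S - f 0 + β * V t (S + 1) ∧
      (1 - α) * V t S ≤ f S - f 0 + lam + a * V t (S + 1) by
    exact fun t => (h t).1
  intro t
  induction t with
  | zero =>
    refine ⟨?_, ?_⟩
    · intro x y _; simp [hV0]
    · intro S _
      simp only [hV0, mul_zero]
      constructor <;> nlinarith [hfm S]
  | succ t ih =>
    obtain ⟨hmono, hinv⟩ := ih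
    have hVt0 : V t 0 = 0 := by
      cases t with
      | zero => exact hV0 0
      | succ u => exact hVz u
    have hnn : ∀ S, 0 ≤ V t S := fun S => hVt0 ▸ hmono (Nat.zero_le S)
    -- monotonicity of V (t+1)
    have hstep : ∀ S : ℕ, V (t + 1) S ≤ V (t + 1) (S + 1) := by
      intro S
      cases S with
      | zero =>
        rw [hVz t, hVrec t 1 le_rfl]
        obtain ⟨h1, h2⟩ := hinv 1 le_rfl
        have : f 0 + (1 - α) * V t 1 ≤
            min (f 1 + β * V t 2) (f 1 + lam + a * V t 2) := by
          refine le_min ?_ ?_ <;> [linarith [h1]; linarith [h2]]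
        linarith [this]
      | succ S =>
        have hS1 : (1 : ℕ) ≤ S + 1 := Nat.le_add_left 1 S
        have hS2 : (1 : ℕ) ≤ S + 1 + 1 := Nat.le_add_left 1 (S + 1)
        rw [hVrec t (S + 1) hS1, hVrec t (S + 1 + 1) hS2]
        have hmin : min (f (S + 1) + β * V t (S + 1 + 1))
            (f (S + 1) + lam + a * V t (S + 1 + 1)) ≤
            min (f (S + 1 + 1) + β * V t (S + 1 + 1 + 1))
            (f (S + 1 + 1) + lam + a * V t (S + 1 + 1 + 1)) := by
          have hfle : f (S + 1) ≤ f (S + 1 + 1) := hfmono (Nat.le_succ _)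
          have hVle : V t (S + 1 + 1) ≤ V t (S + 1 + 1 + 1) := hmono (Nat.le_succ _)
          exact min_le_min (by nlinarith) (by nlinarith)
        linarith [hmin]
    have hmono1 : Monotone (V (t + 1)) := monotone_nat_of_le_succ hstep
    have hnn1 : ∀ S, 0 ≤ V (t + 1) S := fun S => (hVz t) ▸ hmono1 (Nat.zero_le S)
    refine ⟨hmono1, ?_⟩
    intro S hS
    have hS1 : (1 : ℕ) ≤ S + 1 := le_trans hS (Nat.le_succ S)
    have e1 : V (t + 1) S =
        min (f S + β * V t (S + 1)) (f S + lam + a * V t (S + 1))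
          - f 0 - (1 - α) * V t 1 := hVrec t S hS
    have e2 : V (t + 1) (S + 1) =
        min (f (S + 1) + β * V t (S + 1 + 1)) (f (S + 1) + lam + a * V t (S + 1 + 1))
          - f 0 - (1 - α) * V t 1 := hVrec t (S + 1) hS1
    obtain ⟨hi1, hi2⟩ := hinv (S + 1) hS1
    -- key facts
    have hm1a : min (f S + β * V t (S + 1)) (f S + lam + a * V t (S + 1))
        ≤ f S + β * V t (S + 1) := min_le_left _ _
    have hm1b : min (f S + β * V t (S + 1)) (f S + lam + a * V t (S + 1))
        ≤ f S + lam + a * V t (S + 1) := min_le_right _ _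
    have hm2 : (1 - α) * V t (S + 1) + f 0 ≤
        min (f (S + 1) + β * V t (S + 1 + 1)) (f (S + 1) + lam + a * V t (S + 1 + 1)) := by
      refine le_min ?_ ?_ <;> [linarith [hi1]; linarith [hi2]]
    have hfS : f 0 ≤ f S := hfm S
    have hx : 0 ≤ V t 1 := hnn 1
    have hy : 0 ≤ V t (S + 1) := hnn (S + 1)
    set m1 := min (f S + β * V t (S + 1)) (f S + lam + a * V t (S + 1)) with hm1def
    set m2 := min (f (S + 1) + β * V t (S + 1 + 1)) (f (S + 1) + lam + a * V t (S + 1 + 1))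
      with hm2def
    constructor
    · -- β component
      rcases le_or_gt (1 - α) β with hc | hc
      · have h1 : (1 - α) * V (t + 1) S ≤ β * V (t + 1) S :=
          mul_le_mul_of_nonneg_right hc (hnn1 S)
        have h2 : β * V (t + 1) S ≤ β * V (t + 1) (S + 1) :=
          mul_le_mul_of_nonneg_left (hmono1 (Nat.le_succ S)) hb0.le
        linarith
      · rw [e1, e2]
        nlinarith [mul_le_mul_of_nonneg_left hm1a (by linarith : (0:ℝ) ≤ 1 - α),
          mul_le_mul_of_nonneg_left hm2 hb0.le,
          mul_nonneg (mul_nonneg (by linarith : (0:ℝ) ≤ 1 - α)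
            (by linarith : (0:ℝ) ≤ 1 - α - β)) hx,
          mul_nonneg hα0.le (by linarith [hfS] : (0:ℝ) ≤ f S - f 0)]
    · -- a component
      rcases le_or_gt (1 - α) a with hc | hc
      · have h1 : (1 - α) * V (t + 1) S ≤ a * V (t + 1) S :=
          mul_le_mul_of_nonneg_right hc (hnn1 S)
        have h2 : a * V (t + 1) S ≤ a * V (t + 1) (S + 1) :=
          mul_le_mul_of_nonneg_left (hmono1 (Nat.le_succ S)) ha0.le
        linarith
      · rw [e1, e2]
        nlinarith [mul_le_mul_of_nonneg_left hm1b (by linarith : (0:ℝ) ≤ 1 - α),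
          mul_le_mul_of_nonneg_left hm2 ha0.le,
          mul_nonneg (mul_nonneg (by linarith : (0:ℝ) ≤ 1 - α)
            (by linarith : (0:ℝ) ≤ 1 - α - a)) hx,
          mul_nonneg hα0.le (by linarith [hfS] : (0:ℝ) ≤ f S - f 0),
          mul_nonneg hα0.le hlam]
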